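/- Convexity of the parametric value function (S-lemma): Let q₁, q₂ : ℝᵐ → ℝ be nonnegative convex quadratic functions such that the level set { w ∈ ℝᵐ : q₂(w) = t } is nonempty for every t > 0. Then the function f(t) = inf{ q₁(w) : w ∈ ℝᵐ, q₂(w) = t } is convex on (0, ∞). -/

import Mathlib

open Matrix
open scoped BigOperators


/-- A linear function bounded below on `ℝ` is constant. -/
lemma slemma_aux_lin (b c : ℝ) (h : ∀ s : ℝ, 0 ≤ b * s + c) : b = 0 := by
  by_contra hb
  have := h ((-c - 1) / b)
  rw [mul_div_cancel₀ _ hb] at this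
  linarith

/-- 1-D hidden convexity lemma for a pair of quadratics with nonnegative
leading coefficients. -/
lemma slemma_aux_oneD (a₁ b₁ c₁ a₂ b₂ c₂ l : ℝ) (ha₁ : 0 ≤ a₁) (ha₂ : 0 ≤ a₂)
    (hb₁ : a₁ = 0 → b₁ = 0) (hl0 : 0 ≤ l) (hl1 : l ≤ 1) :
    ∃ s : ℝ, a₂ * s ^ 2 + b₂ * s + c₂ = (1 - l) * c₂ + l * (a₂ + b₂ + c₂) ∧
      a₁ * s ^ 2 + b₁ * s + c₁ ≤ (1 - l) * c₁ + l * (a₁ + b₁ + c₁) := by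
  rcases eq_or_lt_of_le ha₂ with h2 | h2
  · -- a₂ = 0 : take s = l
    refine ⟨l, by rw [← h2]; ring, ?_⟩
    nlinarith [mul_nonneg ha₁ (mul_nonneg hl0 (sub_nonneg.2 hl1))]
  · -- a₂ > 0
    have ha₂ne : a₂ ≠ 0 := ne_of_gt h2
    set σ : ℝ := -b₂ / (2 * a₂) with hσ
    have hb2 : b₂ = -2 * a₂ * σ := by rw [hσ]; field_simp
    have hRnn : 0 ≤ (1 - l) * σ ^ 2 + l * (1 - σ) ^ 2 :=
      add_nonneg (mul_nonneg (by linarith) (sq_nonneg _)) (mul_nonneg hl0 (sq_nonneg _))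
    set r : ℝ := Real.sqrt ((1 - l) * σ ^ 2 + l * (1 - σ) ^ 2) with hr
    have hr0 : 0 ≤ r := Real.sqrt_nonneg _
    have hr2 : r ^ 2 = (1 - l) * σ ^ 2 + l * (1 - σ) ^ 2 := Real.sq_sqrt hRnn
    rcases eq_or_lt_of_le ha₁ with h1 | h1
    · -- a₁ = 0, hence b₁ = 0
      have hb1 : b₁ = 0 := hb₁ h1.symm
      refine ⟨σ + r, ?_, ?_⟩
      · rw [hb2]; linear_combination a₂ * hr2
      · rw [← h1, hb1]; nlinarith
    · -- a₁ > 0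
      have ha₁ne : a₁ ≠ 0 := ne_of_gt h1
      set τ : ℝ := -b₁ / (2 * a₁) with hτ
      have hb1 : b₁ = -2 * a₁ * τ := by rw [hτ]; field_simp
      -- r ≥ |σ - l|
      have hσl : (σ - l) ^ 2 ≤ (1 - l) * σ ^ 2 + l * (1 - σ) ^ 2 := by
        nlinarith [mul_nonneg hl0 (sub_nonneg.2 hl1)]
      have habs : |σ - l| ≤ r := by
        rw [← Real.sqrt_sq_eq_abs]
        exact Real.sqrt_le_sqrt hσl
      have hp1 : (σ - τ) * (σ - l) ≤ |σ - τ| * r := by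
        calc (σ - τ) * (σ - l) ≤ |(σ - τ) * (σ - l)| := le_abs_self _
          _ = |σ - τ| * |σ - l| := abs_mul _ _
          _ ≤ |σ - τ| * r := mul_le_mul_of_nonneg_left habs (abs_nonneg _)
      have hkey : (|σ - τ| - r) ^ 2 ≤ (1 - l) * τ ^ 2 + l * (1 - τ) ^ 2 := by
        nlinarith [hp1, hr2, sq_abs (σ - τ)]
      rcases le_total τ σ with hts | hts
      · refine ⟨σ - r, ?_, ?_⟩
        · rw [hb2]; linear_combination a₂ * hr2
        · have hx : |σ - τ| = σ - τ := abs_of_nonneg (by linarith)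
          rw [hx] at hkey
          rw [hb1]
          nlinarith [mul_le_mul_of_nonneg_left hkey (le_of_lt h1)]
      · refine ⟨σ + r, ?_, ?_⟩
        · rw [hb2]; linear_combination a₂ * hr2
        · have hx : |σ - τ| = τ - σ := by rw [abs_sub_comm]; exact abs_of_nonneg (by linarith)
          rw [hx] at hkey
          rw [hb1]
          nlinarith [mul_le_mul_of_nonneg_left hkey (le_of_lt h1)]


/-- Expansion of a quadratic along a line. -/
lemma slemma_aux_expand {m : ℕ} (A : Matrix (Fin m) (Fin m) ℝ) (b : Fin m → ℝ) (c : ℝ)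
    (w d : Fin m → ℝ) (s : ℝ) :
    (w + s • d) ⬝ᵥ A.mulVec (w + s • d) + b ⬝ᵥ (w + s • d) + c
      = (d ⬝ᵥ A.mulVec d) * s ^ 2 + (w ⬝ᵥ A.mulVec d + d ⬝ᵥ A.mulVec w + b ⬝ᵥ d) * s
        + (w ⬝ᵥ A.mulVec w + b ⬝ᵥ w + c) := by
  simp [Matrix.mulVec_add, Matrix.mulVec_smul, dotProduct_add, add_dotProduct,
    dotProduct_smul, smul_dotProduct, smul_eq_mul]
  ring

/-- **Convexity of the parametric value function (S-lemma).**
Let `q₁(w) = wᵀA₁w + b₁ᵀw + c₁` and `q₂(w) = wᵀA₂w + b₂ᵀw + c₂` be nonnegative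
convex quadratic functions on `ℝᵐ` (convexity expressed by positive
semidefiniteness of the symmetric matrices `A₁`, `A₂`) such that the level set
`{ w : q₂(w) = t }` is nonempty for every `t > 0`.  Then
`f(t) = inf{ q₁(w) : q₂(w) = t }` is convex on `(0, ∞)`. -/
theorem stmt_13 {m : ℕ} (A₁ A₂ : Matrix (Fin m) (Fin m) ℝ)
    (b₁ b₂ : Fin m → ℝ) (c₁ c₂ : ℝ)
    (hA₁ : A₁.PosSemidef) (hA₂ : A₂.PosSemidef) :
    let q₁ : (Fin m → ℝ) → ℝ := fun w => w ⬝ᵥ A₁.mulVec w + b₁ ⬝ᵥ w + c₁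
    let q₂ : (Fin m → ℝ) → ℝ := fun w => w ⬝ᵥ A₂.mulVec w + b₂ ⬝ᵥ w + c₂
    (∀ w, 0 ≤ q₁ w) → (∀ w, 0 ≤ q₂ w) →
    (∀ t : ℝ, 0 < t → ∃ w, q₂ w = t) →
    ConvexOn ℝ (Set.Ioi (0 : ℝ))
      (fun t => sInf { z | ∃ w : Fin m → ℝ, q₂ w = t ∧ z = q₁ w }) := by
  intro q₁ q₂ hq₁ hq₂ hne
  -- the key two-point lemma
  have key : ∀ (w₁ w₂ : Fin m → ℝ) (l : ℝ), 0 ≤ l → l ≤ 1 →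
      ∃ w, q₂ w = (1 - l) * q₂ w₁ + l * q₂ w₂ ∧
        q₁ w ≤ (1 - l) * q₁ w₁ + l * q₁ w₂ := by
    intro w₁ w₂ l hl0 hl1
    set d : Fin m → ℝ := w₂ - w₁ with hd
    have he₁ : ∀ s : ℝ, q₁ (w₁ + s • d) =
        (d ⬝ᵥ A₁.mulVec d) * s ^ 2 + (w₁ ⬝ᵥ A₁.mulVec d + d ⬝ᵥ A₁.mulVec w₁ + b₁ ⬝ᵥ d) * s
          + q₁ w₁ := fun s => slemma_aux_expand A₁ b₁ c₁ w₁ d s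
    have he₂ : ∀ s : ℝ, q₂ (w₁ + s • d) =
        (d ⬝ᵥ A₂.mulVec d) * s ^ 2 + (w₁ ⬝ᵥ A₂.mulVec d + d ⬝ᵥ A₂.mulVec w₁ + b₂ ⬝ᵥ d) * s
          + q₂ w₁ := fun s => slemma_aux_expand A₂ b₂ c₂ w₁ d s
    have hw₂ : w₁ + (1 : ℝ) • d = w₂ := by simp [hd]
    have ha₁ : 0 ≤ d ⬝ᵥ A₁.mulVec d := by simpa using hA₁.dotProduct_mulVec_nonneg d
    have ha₂ : 0 ≤ d ⬝ᵥ A₂.mulVec d := by simpa using hA₂.dotProduct_mulVec_nonneg d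
    have hbz : d ⬝ᵥ A₁.mulVec d = 0 →
        w₁ ⬝ᵥ A₁.mulVec d + d ⬝ᵥ A₁.mulVec w₁ + b₁ ⬝ᵥ d = 0 := by
      intro h0
      refine slemma_aux_lin _ (q₁ w₁) (fun s => ?_)
      have := hq₁ (w₁ + s • d)
      rw [he₁ s, h0] at this
      linarith [this]
    obtain ⟨s, hs2, hs1⟩ := slemma_aux_oneD
      (d ⬝ᵥ A₁.mulVec d) (w₁ ⬝ᵥ A₁.mulVec d + d ⬝ᵥ A₁.mulVec w₁ + b₁ ⬝ᵥ d) (q₁ w₁)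
      (d ⬝ᵥ A₂.mulVec d) (w₁ ⬝ᵥ A₂.mulVec d + d ⬝ᵥ A₂.mulVec w₁ + b₂ ⬝ᵥ d) (q₂ w₁)
      l ha₁ ha₂ hbz hl0 hl1
    refine ⟨w₁ + s • d, ?_, ?_⟩
    · have h2 : q₂ w₂ = d ⬝ᵥ A₂.mulVec d + (w₁ ⬝ᵥ A₂.mulVec d + d ⬝ᵥ A₂.mulVec w₁ + b₂ ⬝ᵥ d)
          + q₂ w₁ := by rw [← hw₂, he₂ 1]; ring
      rw [he₂ s, hs2, h2]
    · have h1 : q₁ w₂ = d ⬝ᵥ A₁.mulVec d + (w₁ ⬝ᵥ A₁.mulVec d + d ⬝ᵥ A₁.mulVec w₁ + b₁ ⬝ᵥ d)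
          + q₁ w₁ := by rw [← hw₂, he₁ 1]; ring
      rw [he₁ s, h1]
      exact hs1
  -- now the convexity argument
  refine ⟨convex_Ioi 0, ?_⟩
  intro x hx y hy u v hu hv huv
  simp only [smul_eq_mul]
  have hbdd : ∀ t : ℝ, BddBelow {z | ∃ w : Fin m → ℝ, q₂ w = t ∧ z = q₁ w} := by
    intro t
    exact ⟨0, fun z hz => by obtain ⟨w, -, rfl⟩ := hz; exact hq₁ w⟩
  have hnex : ∀ t : ℝ, 0 < t → Set.Nonempty {z | ∃ w : Fin m → ℝ, q₂ w = t ∧ z = q₁ w} := by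
    intro t ht
    obtain ⟨w, hw⟩ := hne t ht
    exact ⟨q₁ w, w, hw, rfl⟩
  apply le_of_forall_pos_le_add
  intro ε hε
  obtain ⟨z₁, hz₁mem, hz₁⟩ := exists_lt_of_csInf_lt (hnex x hx) (lt_add_of_pos_right _ hε)
  obtain ⟨z₂, hz₂mem, hz₂⟩ := exists_lt_of_csInf_lt (hnex y hy) (lt_add_of_pos_right _ hε)
  obtain ⟨w₁, hw₁t, rfl⟩ := hz₁mem
  obtain ⟨w₂, hw₂t, rfl⟩ := hz₂mem
  obtain ⟨w, hw2, hw1⟩ := key w₁ w₂ v hv (by linarith)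
  have huv' : 1 - v = u := by linarith
  rw [huv', hw₁t, hw₂t] at hw2
  rw [huv'] at hw1
  have hle : sInf {z | ∃ w : Fin m → ℝ, q₂ w = u * x + v * y ∧ z = q₁ w} ≤ q₁ w :=
    csInf_le (hbdd _) ⟨w, hw2, rfl⟩
  have e1 : u * q₁ w₁ ≤ u * (sInf {z | ∃ w : Fin m → ℝ, q₂ w = x ∧ z = q₁ w} + ε) :=
    mul_le_mul_of_nonneg_left (le_of_lt hz₁) hu
  have e2 : v * q₁ w₂ ≤ v * (sInf {z | ∃ w : Fin m → ℝ, q₂ w = y ∧ z = q₁ w} + ε) :=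
    mul_le_mul_of_nonneg_left (le_of_lt hz₂) hv
  nlinarith [hle, hw1, e1, e2]
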